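/- Under the exact ideal-expectation setup for the six parity operators, let V′ = span_ℂ {Ψ, A₁₂ Ψ, A₁₆ Ψ, A₁₂(A₁₆ Ψ)} ⊆ H. Then V′ is invariant under each of the six operators: for every A ∈ {A₁₂, A₃₄, A₅₆, A₄₅, A₁₆, A₂₃} and every v ∈ V′, A v ∈ V′. -/
import Mathlib


open scoped InnerProductSpace

/-- **Invariance of the subspace `V'`.** Under the exact ideal-expectation setup for the six
parity operators, the subspace `V' = span {Ψ, A₁₂ Ψ, A₁₆ Ψ, A₁₂ (A₁₆ Ψ)}` is invariant under
each of the six operators. -/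
theorem span_invariant_under_parities
    {H : Type*} [NormedAddCommGroup H] [InnerProductSpace ℂ H] [CompleteSpace H]
    (A₁₂ A₃₄ A₅₆ A₄₅ A₁₆ A₂₃ : H →L[ℂ] H)
    (h₁₂ : IsSelfAdjoint A₁₂) (h₃₄ : IsSelfAdjoint A₃₄) (h₅₆ : IsSelfAdjoint A₅₆)
    (h₄₅ : IsSelfAdjoint A₄₅) (h₁₆ : IsSelfAdjoint A₁₆) (h₂₃ : IsSelfAdjoint A₂₃)
    (hi₁₂ : A₁₂ ∘L A₁₂ = 1) (hi₃₄ : A₃₄ ∘L A₃₄ = 1) (hi₅₆ : A₅₆ ∘L A₅₆ = 1)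
    (hi₄₅ : A₄₅ ∘L A₄₅ = 1) (hi₁₆ : A₁₆ ∘L A₁₆ = 1) (hi₂₃ : A₂₃ ∘L A₂₃ = 1)
    (c₁ : A₁₂ ∘L A₃₄ = A₃₄ ∘L A₁₂) (c₂ : A₁₂ ∘L A₅₆ = A₅₆ ∘L A₁₂)
    (c₃ : A₃₄ ∘L A₅₆ = A₅₆ ∘L A₃₄) (c₄ : A₄₅ ∘L A₁₆ = A₁₆ ∘L A₄₅)
    (c₅ : A₄₅ ∘L A₂₃ = A₂₃ ∘L A₄₅) (c₆ : A₁₆ ∘L A₂₃ = A₂₃ ∘L A₁₆)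
    (c₇ : A₁₂ ∘L A₄₅ = A₄₅ ∘L A₁₂) (c₈ : A₃₄ ∘L A₁₆ = A₁₆ ∘L A₃₄)
    (c₉ : A₅₆ ∘L A₂₃ = A₂₃ ∘L A₅₆)
    (Ψ : H) (hΨ : ‖Ψ‖ = 1)
    (e₁ : A₁₂ (A₃₄ (A₅₆ Ψ)) = Ψ) (e₂ : A₄₅ (A₁₆ (A₂₃ Ψ)) = Ψ)
    (e₃ : A₁₂ (A₄₅ Ψ) = Ψ) (e₄ : A₃₄ (A₁₆ Ψ) = Ψ) (e₅ : A₅₆ (A₂₃ Ψ) = -Ψ) :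
    ∀ v ∈ Submodule.span ℂ ({Ψ, A₁₂ Ψ, A₁₆ Ψ, A₁₂ (A₁₆ Ψ)} : Set H),
      A₁₂ v ∈ Submodule.span ℂ ({Ψ, A₁₂ Ψ, A₁₆ Ψ, A₁₂ (A₁₆ Ψ)} : Set H) ∧
      A₃₄ v ∈ Submodule.span ℂ ({Ψ, A₁₂ Ψ, A₁₆ Ψ, A₁₂ (A₁₆ Ψ)} : Set H) ∧
      A₅₆ v ∈ Submodule.span ℂ ({Ψ, A₁₂ Ψ, A₁₆ Ψ, A₁₂ (A₁₆ Ψ)} : Set H) ∧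
      A₄₅ v ∈ Submodule.span ℂ ({Ψ, A₁₂ Ψ, A₁₆ Ψ, A₁₂ (A₁₆ Ψ)} : Set H) ∧
      A₁₆ v ∈ Submodule.span ℂ ({Ψ, A₁₂ Ψ, A₁₆ Ψ, A₁₂ (A₁₆ Ψ)} : Set H) ∧
      A₂₃ v ∈ Submodule.span ℂ ({Ψ, A₁₂ Ψ, A₁₆ Ψ, A₁₂ (A₁₆ Ψ)} : Set H) := by
  -- pointwise versions of the operator identities
  have pc : ∀ (B C : H →L[ℂ] H), B ∘L C = C ∘L B → ∀ x, B (C x) = C (B x) := by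
    intro B C h x
    simpa using ContinuousLinearMap.ext_iff.mp h x
  have pi : ∀ (B : H →L[ℂ] H), B ∘L B = 1 → ∀ x, B (B x) = x := by
    intro B h x
    simpa using ContinuousLinearMap.ext_iff.mp h x
  have i12 := pi _ hi₁₂
  have i34 := pi _ hi₃₄
  have i56 := pi _ hi₅₆
  have i45 := pi _ hi₄₅
  have i16 := pi _ hi₁₆
  have i23 := pi _ hi₂₃
  have k1 := pc _ _ c₁
  have k2 := pc _ _ c₂
  have k3 := pc _ _ c₃
  have k4 := pc _ _ c₄
  have k5 := pc _ _ c₅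
  have k6 := pc _ _ c₆
  have k7 := pc _ _ c₇
  have k8 := pc _ _ c₈
  have k9 := pc _ _ c₉
  -- basic vector identities
  have h45Ψ : A₄₅ Ψ = A₁₂ Ψ := by
    have := congrArg A₁₂ e₃; rwa [i12] at this
  have h34Ψ : A₃₄ Ψ = A₁₆ Ψ := by
    have := congrArg A₃₄ e₄; rw [i34] at this; exact this.symm
  have step : A₃₄ (A₅₆ Ψ) = A₁₂ Ψ := by
    have := congrArg A₁₂ e₁; rwa [i12] at this
  have h56Ψ : A₅₆ Ψ = A₁₂ (A₁₆ Ψ) := by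
    have := congrArg A₃₄ step
    rwa [i34, ← k1, h34Ψ] at this
  have h23Ψ : A₂₃ Ψ = -A₁₂ (A₁₆ Ψ) := by
    have := congrArg A₅₆ e₅
    rwa [i56, map_neg, h56Ψ] at this
  have step2 : A₄₅ (A₁₆ (A₁₂ (A₁₆ Ψ))) = -Ψ := by
    have h := e₂
    rw [h23Ψ, map_neg, map_neg] at h
    exact neg_eq_iff_eq_neg.mp h
  have h16g4 : A₁₆ (A₁₂ (A₁₆ Ψ)) = -A₁₂ Ψ := by
    have := congrArg A₄₅ step2
    rwa [i45, map_neg, h45Ψ] at this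
  have h16g2 : A₁₆ (A₁₂ Ψ) = -A₁₂ (A₁₆ Ψ) := by
    have := congrArg A₁₆ h16g4
    rw [i16, map_neg] at this
    exact neg_eq_iff_eq_neg.mp this.symm
  -- actions on the generators
  have a34g2 : A₃₄ (A₁₂ Ψ) = A₁₂ (A₁₆ Ψ) := by
    rw [← k1, h34Ψ]
  have a34g4 : A₃₄ (A₁₂ (A₁₆ Ψ)) = A₁₂ Ψ := by
    rw [← k1, k8, h34Ψ, i16]
  have a56g2 : A₅₆ (A₁₂ Ψ) = A₁₆ Ψ := by
    rw [← k2, h56Ψ, i12]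
  have a56g3 : A₅₆ (A₁₆ Ψ) = A₁₂ Ψ := by
    rw [← h34Ψ, ← k3, h56Ψ, a34g4]
  have a56g4 : A₅₆ (A₁₂ (A₁₆ Ψ)) = Ψ := by
    rw [← h56Ψ, i56]
  have a45g2 : A₄₅ (A₁₂ Ψ) = Ψ := by
    rw [← h45Ψ, i45]
  have a45g3 : A₄₅ (A₁₆ Ψ) = -A₁₂ (A₁₆ Ψ) := by
    rw [k4, h45Ψ, h16g2]
  have a45g4 : A₄₅ (A₁₂ (A₁₆ Ψ)) = -A₁₆ Ψ := by
    rw [← k7, a45g3, map_neg, i12]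
  have a23g2 : A₂₃ (A₁₂ Ψ) = A₁₆ Ψ := by
    rw [← h45Ψ, ← k5, h23Ψ, map_neg, a45g4, neg_neg]
  have a23g3 : A₂₃ (A₁₆ Ψ) = A₁₂ Ψ := by
    rw [← k6, h23Ψ, map_neg, h16g4, neg_neg]
  have a23g4 : A₂₃ (A₁₂ (A₁₆ Ψ)) = -Ψ := by
    rw [← h56Ψ, ← k9, h23Ψ, map_neg, a56g4]
  -- membership of generators
  set V := Submodule.span ℂ ({Ψ, A₁₂ Ψ, A₁₆ Ψ, A₁₂ (A₁₆ Ψ)} : Set H) with hV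
  have m1 : Ψ ∈ V := Submodule.subset_span (by simp)
  have m2 : A₁₂ Ψ ∈ V := Submodule.subset_span (by simp)
  have m3 : A₁₆ Ψ ∈ V := Submodule.subset_span (by simp)
  have m4 : A₁₂ (A₁₆ Ψ) ∈ V := Submodule.subset_span (by simp)
  have inv : ∀ (B : H →L[ℂ] H), B Ψ ∈ V → B (A₁₂ Ψ) ∈ V → B (A₁₆ Ψ) ∈ V →
      B (A₁₂ (A₁₆ Ψ)) ∈ V → ∀ v ∈ V, B v ∈ V := by
    intro B hb1 hb2 hb3 hb4 v hv
    induction hv using Submodule.span_induction with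
    | mem x hx =>
      simp only [Set.mem_insert_iff, Set.mem_singleton_iff] at hx
      rcases hx with rfl | rfl | rfl | rfl <;> assumption
    | zero => simpa using V.zero_mem
    | add x y _ _ hx hy => simpa [map_add] using V.add_mem hx hy
    | smul a x _ hx => simpa [map_smul] using V.smul_mem a hx
  intro v hv
  refine ⟨inv A₁₂ m2 (by rw [i12]; exact m1) m4 (by rw [i12]; exact m3) v hv,
    inv A₃₄ (by rw [h34Ψ]; exact m3) (by rw [a34g2]; exact m4) (by rw [e₄]; exact m1)
      (by rw [a34g4]; exact m2) v hv,
    inv A₅₆ (by rw [h56Ψ]; exact m4) (by rw [a56g2]; exact m3) (by rw [a56g3]; exact m2)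
      (by rw [a56g4]; exact m1) v hv,
    inv A₄₅ (by rw [h45Ψ]; exact m2) (by rw [a45g2]; exact m1)
      (by rw [a45g3]; exact V.neg_mem m4) (by rw [a45g4]; exact V.neg_mem m3) v hv,
    inv A₁₆ m3 (by rw [h16g2]; exact V.neg_mem m4) (by rw [i16]; exact m1)
      (by rw [h16g4]; exact V.neg_mem m2) v hv,
    inv A₂₃ (by rw [h23Ψ]; exact V.neg_mem m4) (by rw [a23g2]; exact m3)
      (by rw [a23g3]; exact m2) (by rw [a23g4]; exact V.neg_mem m1) v hv⟩
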